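/- Let G be a finite simple graph and let I be a nonempty set of false twins of G, i.e., all vertices of I have the same neighborhood, and let N(I) denote this common neighborhood. If |N(I)| ≤ |I| − 1, then for every perfect cancellation ordering σ of G, the set N(I) is σ-linked. -/

import Mathlib

/-- Apply a CNOT gate `g = (control, target)` to a state `t : V → Finset V`:
the target wire receives the symmetric difference of the control and target terms,
all other wires are unchanged. -/
def applyGate {V : Type*} [DecidableEq V] (g : V × V) (t : V → Finset V) : V → Finset V :=
  fun w => if w = g.2 then symmDiff (t g.1) (t g.2) else t w

/-- Run a circuit (a list of CNOT gates) from the initial state `term v = {v}`. -/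
def runCircuit {V : Type*} [DecidableEq V] (C : List (V × V)) : V → Finset V :=
  C.foldl (fun t g => applyGate g t) (fun v => {v})

/-- `C` is a graphic parity network for the graph `G`:
every gate has distinct control and target, every edge `{u, v}` of `G` appears as the
term of some wire after some prefix of the circuit, and the final state is the initial
state. Its size is `C.length`. -/
def IsGPN {V : Type*} [DecidableEq V] (G : SimpleGraph V) (C : List (V × V)) : Prop :=
  (∀ g ∈ C, g.1 ≠ g.2) ∧
  (∀ u v : V, G.Adj u v → ∃ (k : ℕ) (w : V), runCircuit (C.take k) w = {u, v}) ∧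
  (∀ v : V, runCircuit C v = {v})

/-- A set `U` is `σ`-linked if any two vertices of `U` that are consecutive in the
restriction of the ordering `σ` to `U` are adjacent in `G`. -/
def SigmaLinked {V : Type*} (G : SimpleGraph V) {n : ℕ} (σ : V ≃ Fin n) (U : Set V) :
    Prop :=
  ∀ ⦃a b : V⦄, a ∈ U → b ∈ U → σ a < σ b →
    (∀ w ∈ U, ¬(σ a < σ w ∧ σ w < σ b)) → G.Adj a b

/-- The set of neighbors of `v` occurring after `v` in the ordering `σ`. -/
def NPlus {V : Type*} (G : SimpleGraph V) {n : ℕ} (σ : V ≃ Fin n) (v : V) : Set V :=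
  {u | G.Adj v u ∧ σ v < σ u}

/-- `σ` is a perfect cancellation ordering of `G`: for every vertex `v` and every
connected component `K` of `G − v`, the set `N⁺_σ(v) ∩ K` is `σ`-linked. -/
def IsPCO {V : Type*} [Fintype V] (G : SimpleGraph V)
    (σ : V ≃ Fin (Fintype.card V)) : Prop :=
  ∀ (v : V) (K : (G.induce {u : V | u ≠ v}).ConnectedComponent),
    SigmaLinked G σ (NPlus G σ v ∩ (Subtype.val '' K.supp))

/-- A perfect cancellation graph is a graph admitting a perfect cancellation ordering. -/
def PerfectCancellationGraph {V : Type*} [Fintype V] (G : SimpleGraph V) : Prop :=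
  ∃ σ : V ≃ Fin (Fintype.card V), IsPCO G σ

/-- If `I` is a nonempty set of false twins of `G` with common neighborhood `NI` and
`|NI| ≤ |I| − 1`, then `NI` is `σ`-linked in every perfect cancellation ordering `σ`
of `G`. -/
theorem stmt13 {V : Type*} [Fintype V] [DecidableEq V] (G : SimpleGraph V)
    (I : Set V) (hne : I.Nonempty) (NI : Set V)
    (htwin : ∀ a ∈ I, G.neighborSet a = NI)
    (hsize : NI.ncard ≤ I.ncard - 1)
    (σ : V ≃ Fin (Fintype.card V)) (hσ : IsPCO G σ) :
    SigmaLinked G σ NI := by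
  classical
  intro a b ha hb hab hgap
  -- basic facts about false twins
  have hadj : ∀ u ∈ I, ∀ w ∈ NI, G.Adj u w := by
    intro u hu w hw
    rw [← htwin u hu] at hw
    exact hw
  have hIN : ∀ u ∈ I, u ∉ NI := by
    intro u hu hmem
    exact G.irrefl (hadj u hu u hmem)
  obtain ⟨u₀, hu₀⟩ := hne
  have hfinNI : NI.Finite := Set.toFinite NI
  have hfinI : I.Finite := Set.toFinite I
  have hNIcard : 1 ≤ NI.ncard := (Set.ncard_pos hfinNI).mpr ⟨a, ha⟩
  have hIcard : 2 ≤ I.ncard := by omega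
  by_cases hcase : ∃ v ∈ I, σ v < σ a
  · -- Case 1: some vertex of I comes before a
    obtain ⟨v, hvI, hva⟩ := hcase
    obtain ⟨u, huI, huv⟩ : ∃ u ∈ I, u ≠ v := Set.exists_ne_of_one_lt_ncard (by omega) v
    have hav : a ≠ v := fun h => hIN v hvI (h ▸ ha)
    have hbv : b ≠ v := fun h => hIN v hvI (h ▸ hb)
    set s : Set V := {x : V | x ≠ v} with hs
    have huvs : u ∈ s := huv
    set K := (G.induce s).connectedComponentMk ⟨a, hav⟩ with hK
    have hreach : (G.induce s).Reachable ⟨b, hbv⟩ ⟨a, hav⟩ := by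
      have h1 : (G.induce s).Adj ⟨b, hbv⟩ ⟨u, huvs⟩ := (hadj u huI b hb).symm
      have h2 : (G.induce s).Adj ⟨u, huvs⟩ ⟨a, hav⟩ := hadj u huI a ha
      exact h1.reachable.trans h2.reachable
    have haS : a ∈ NPlus G σ v ∩ (Subtype.val '' K.supp) :=
      ⟨⟨hadj v hvI a ha, hva⟩, ⟨⟨a, hav⟩, by rw [SimpleGraph.ConnectedComponent.mem_supp_iff], rfl⟩⟩
    have hbS : b ∈ NPlus G σ v ∩ (Subtype.val '' K.supp) :=
      ⟨⟨hadj v hvI b hb, hva.trans hab⟩,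
        ⟨⟨b, hbv⟩, by
          rw [SimpleGraph.ConnectedComponent.mem_supp_iff, hK]
          exact SimpleGraph.ConnectedComponent.sound hreach, rfl⟩⟩
    refine hσ v K haS hbS hab ?_
    intro w hw
    have hwNI : w ∈ NI := htwin v hvI ▸ hw.1.1
    exact hgap w hwNI
  · -- Case 2: all of I comes after a; derive a contradiction via a counting argument
    push_neg at hcase
    have haI : ∀ v ∈ I, σ a < σ v := by
      intro v hv
      have h2 : v ≠ a := fun h => hIN v hv (h ▸ ha)
      exact lt_of_le_of_ne (le_of_not_gt (fun h => absurd h (not_lt.mpr (hcase v hv))))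
        (fun h => h2 (σ.injective h.symm))
    exfalso
    have hba : b ≠ a := fun h => absurd hab (by rw [h]; exact lt_irrefl _)
    have hIa : ∀ u ∈ I, u ≠ a := fun u hu h => hIN u hu (h ▸ ha)
    set s : Set V := {x : V | x ≠ a} with hs
    set K := (G.induce s).connectedComponentMk ⟨u₀, hIa u₀ hu₀⟩ with hK
    set S := NPlus G σ a ∩ (Subtype.val '' K.supp) with hSdef
    have hS : SigmaLinked G σ S := hσ a K
    have hIS : ∀ u ∈ I, u ∈ S := by
      intro u hu
      refine ⟨⟨(hadj u hu a ha).symm, haI u hu⟩, ⟨⟨u, hIa u hu⟩, ?_, rfl⟩⟩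
      rw [SimpleGraph.ConnectedComponent.mem_supp_iff, hK]
      refine SimpleGraph.ConnectedComponent.sound ?_
      have h1 : (G.induce s).Adj ⟨u, hIa u hu⟩ ⟨b, hba⟩ := hadj u hu b hb
      have h2 : (G.induce s).Adj ⟨b, hba⟩ ⟨u₀, hIa u₀ hu₀⟩ := (hadj u₀ hu₀ b hb).symm
      exact h1.reachable.trans h2.reachable
    -- the maximum of I in the ordering
    obtain ⟨vm, hvmF, hvm⟩ := Finset.exists_max_image hfinI.toFinset (fun v => σ v)
      ⟨u₀, hfinI.mem_toFinset.mpr hu₀⟩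
    have hvmI : vm ∈ I := hfinI.mem_toFinset.mp hvmF
    have hvm' : ∀ v ∈ I, σ v ≤ σ vm := fun v hv => hvm v (hfinI.mem_toFinset.mpr hv)
    -- for each non-maximal v ∈ I, choose the next element of S after v
    have hex : ∀ v : V, ∃ w : V, (v ∈ I ∧ v ≠ vm) →
        (w ∈ NI ∧ w ≠ a ∧ σ v < σ w ∧ ∀ w' ∈ S, σ v < σ w' → σ w ≤ σ w') := by
      intro v
      by_cases hv : v ∈ I ∧ v ≠ vm
      · obtain ⟨hvI, hvne⟩ := hv
        set Tf : Finset V := Finset.univ.filter (fun w => w ∈ S ∧ σ v < σ w) with hTf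
        have hvmT : vm ∈ Tf := by
          rw [hTf, Finset.mem_filter]
          exact ⟨Finset.mem_univ _, hIS vm hvmI,
            lt_of_le_of_ne (hvm' v hvI) (fun h => hvne (σ.injective h))⟩
        obtain ⟨w, hwT, hwmin⟩ := Finset.exists_min_image Tf (fun w => σ w) ⟨vm, hvmT⟩
        rw [hTf, Finset.mem_filter] at hwT
        obtain ⟨-, hwS, hvw⟩ := hwT
        have hadjvw : G.Adj v w := by
          refine hS (hIS v hvI) hwS hvw ?_
          intro w' hw' ⟨h1, h2⟩
          have : w' ∈ Tf := by rw [hTf, Finset.mem_filter]; exact ⟨Finset.mem_univ _, hw', h1⟩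
          exact absurd (hwmin w' this) (not_le.mpr h2)
        have hwNI : w ∈ NI := htwin v hvI ▸ hadjvw
        refine ⟨w, fun _ => ⟨hwNI, ?_, hvw, ?_⟩⟩
        · intro h
          exact absurd ((haI v hvI).trans hvw) (by rw [h]; exact lt_irrefl _)
        · intro w' hw' h1
          exact hwmin w' (by rw [hTf, Finset.mem_filter]; exact ⟨Finset.mem_univ _, hw', h1⟩)
      · exact ⟨a, fun h => absurd h hv⟩
    choose f hf using hex
    have hmaps : ∀ v ∈ I \ {vm}, f v ∈ NI \ {a} := by
      intro v hv
      obtain ⟨h1, h2, -, -⟩ := hf v ⟨hv.1, hv.2⟩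
      exact ⟨h1, h2⟩
    have hinj : Set.InjOn f (I \ {vm}) := by
      intro v hv v' hv' heq
      by_contra hne'
      have key : ∀ x y : V, x ∈ I \ {vm} → y ∈ I \ {vm} → f x = f y → σ x < σ y → False := by
        intro x y hx hy hxy hlt
        obtain ⟨-, -, -, hminx⟩ := hf x ⟨hx.1, hx.2⟩
        obtain ⟨-, -, hyfy, -⟩ := hf y ⟨hy.1, hy.2⟩
        have h1 : σ (f x) ≤ σ y := hminx y (hIS y hy.1) hlt
        rw [hxy] at h1
        exact absurd hyfy (not_lt.mpr h1)
      rcases lt_trichotomy (σ v) (σ v') with h | h | h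
      · exact key v v' hv hv' heq h
      · exact hne' (σ.injective h)
      · exact key v' v hv' hv heq.symm h
    have hle : (I \ {vm}).ncard ≤ (NI \ {a}).ncard :=
      Set.ncard_le_ncard_of_injOn f hmaps hinj (Set.toFinite _)
    rw [Set.ncard_diff_singleton_of_mem hvmI,
      Set.ncard_diff_singleton_of_mem ha] at hle
    omega
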